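/- For α ∈ (0,∞) \ {1}, let Ω_α = {(x', x_{n+1}) ∈ ℝ^n × ℝ : x_{n+1} > |x'|^α} (n ≥ 2). If α > 1 then H^n(B(0,r) ∩ ∂Ω_α)/r^n → 0 as r → ∞, so the lower Ahlfors-David regularity condition fails at 0 at large scales. If α < 1 then H^n(B(0,r) ∩ ∂Ω_α)/r^n → 0 as r → 0^+, so the lower ADR condition at small scales fails at 0. -/

import Mathlib

open Metric MeasureTheory Set Filter
open scoped Topology

noncomputable section

/-- The boundary of `Ω_α`, i.e. the graph `{(x', |x'|^α)}` in `ℝ^n × ℝ`. -/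
def graphAlpha (n : ℕ) (α : ℝ) : Set (EuclideanSpace ℝ (Fin n) × ℝ) :=
  {p | p.2 = ‖p.1‖ ^ α}

open scoped ENNReal NNReal

/-- Lipschitz estimate for `rpow` on an interval with controlled derivative. -/
lemma abs_rpow_sub_rpow_le {β A B : ℝ} (hA : 0 ≤ A)
    (hd : ∀ s ∈ Set.Icc A B, s ≠ 0 ∨ 1 ≤ β)
    (hL : ∀ s ∈ Set.Icc A B, s ^ (β - 1) ≤ 1) :
    ∀ x ∈ Set.Icc A B, ∀ y ∈ Set.Icc A B, |x ^ β - y ^ β| ≤ |β| * |x - y| := by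
  have hlip : LipschitzOnWith (Real.toNNReal |β|) (fun s : ℝ => s ^ β) (Set.Icc A B) := by
    apply (convex_Icc A B).lipschitzOnWith_of_nnnorm_hasDerivWithin_le
      (f' := fun s : ℝ => β * s ^ (β - 1))
    · intro x hx
      exact (Real.hasDerivAt_rpow_const (hd x hx)).hasDerivWithinAt
    · intro x hx
      rw [← NNReal.coe_le_coe, coe_nnnorm, Real.coe_toNNReal _ (abs_nonneg _),
        Real.norm_eq_abs, abs_mul]
      have h1 : 0 ≤ x ^ (β - 1) := Real.rpow_nonneg (hA.trans hx.1) _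
      calc |β| * |x ^ (β - 1)| = |β| * x ^ (β - 1) := by rw [abs_of_nonneg h1]
        _ ≤ |β| * 1 := by
            exact mul_le_mul_of_nonneg_left (hL x hx) (abs_nonneg _)
        _ = |β| := mul_one _
  intro x hx y hy
  have := hlip.dist_le_mul x hx y hy
  rwa [Real.dist_eq, Real.dist_eq, Real.coe_toNNReal _ (abs_nonneg _)] at this

/-- The inverse of the canonical equiv `EuclideanSpace ℝ (Fin n) → (Fin n → ℝ)` is
`√n`-Lipschitz. -/
lemma lipschitz_equiv_symm (n : ℕ) :
    LipschitzWith (Real.toNNReal (Real.sqrt n))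
      ((WithLp.equiv 2 (Fin n → ℝ)).symm) := by
  apply LipschitzWith.of_dist_le_mul
  intro w v
  rw [Real.coe_toNNReal _ (Real.sqrt_nonneg _), dist_eq_norm, dist_eq_norm]
  have hsub : (WithLp.equiv 2 (Fin n → ℝ)).symm w - (WithLp.equiv 2 (Fin n → ℝ)).symm v
      = (WithLp.equiv 2 (Fin n → ℝ)).symm (w - v) := rfl
  rw [hsub]
  set u := w - v
  have h1 : ‖(WithLp.equiv 2 (Fin n → ℝ)).symm u‖
      = Real.sqrt (∑ i : Fin n, ‖u i‖ ^ 2) := by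
    rw [EuclideanSpace.norm_eq]
    rfl
  rw [h1]
  have h2 : ∑ i : Fin n, ‖u i‖ ^ 2 ≤ (n : ℝ) * ‖u‖ ^ 2 := by
    calc ∑ i : Fin n, ‖u i‖ ^ 2 ≤ ∑ _i : Fin n, ‖u‖ ^ 2 := by
          apply Finset.sum_le_sum
          intro i _
          exact pow_le_pow_left₀ (norm_nonneg _) (norm_le_pi_norm u i) 2
      _ = (n : ℝ) * ‖u‖ ^ 2 := by simp [Finset.sum_const, Finset.card_univ, mul_comm]
  calc Real.sqrt (∑ i : Fin n, ‖u i‖ ^ 2) ≤ Real.sqrt ((n : ℝ) * ‖u‖ ^ 2) :=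
        Real.sqrt_le_sqrt h2
    _ = Real.sqrt n * ‖u‖ := by
        rw [Real.sqrt_mul (Nat.cast_nonneg n), Real.sqrt_sq (norm_nonneg _)]

/-- Comparison of Hausdorff measure with Lebesgue on Euclidean space. -/
lemma hausdorff_le_volume {n : ℕ} (S : Set (EuclideanSpace ℝ (Fin n)))
    (hS : MeasurableSet S) :
    μH[(n : ℝ)] S ≤ (Real.toNNReal (Real.sqrt n) : ℝ≥0∞) ^ (n : ℝ) * volume S := by
  set L := (WithLp.equiv 2 (Fin n → ℝ)).symm
  set e := (WithLp.equiv 2 (Fin n → ℝ))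
  have himg : S = L '' (e '' S) := by
    rw [Set.image_image]
    simp [L, e]
  have h1 : μH[(n : ℝ)] S ≤ (Real.toNNReal (Real.sqrt n) : ℝ≥0∞) ^ (n : ℝ) *
      μH[(n : ℝ)] (e '' S) := by
    conv_lhs => rw [himg]
    exact (lipschitz_equiv_symm n).hausdorffMeasure_image_le (Nat.cast_nonneg n) _
  have h2 : (μH[(n : ℝ)] : Measure (Fin n → ℝ)) = volume := by
    have := MeasureTheory.hausdorffMeasure_pi_real (ι := Fin n)
    rwa [Fintype.card_fin] at this
  have h3 : volume (e '' S) = volume S := by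
    have hps : e '' S = L ⁻¹' S := by
      ext w
      constructor
      · rintro ⟨x, hx, rfl⟩; simpa [L, e] using hx
      · intro hw; exact ⟨L w, hw, by simp [L, e]⟩
    rw [hps]
    exact (PiLp.volume_preserving_toLp (Fin n)).measure_preimage
      hS.nullMeasurableSet
  calc μH[(n : ℝ)] S ≤ _ := h1
    _ = (Real.toNNReal (Real.sqrt n) : ℝ≥0∞) ^ (n : ℝ) * volume S := by rw [h2, h3]

lemma pow_sub_pow_le {x y : ℝ} (n : ℕ) (hy : 0 ≤ y) (hxy : y ≤ x) :
    x ^ n - y ^ n ≤ (n : ℝ) * x ^ (n - 1) * (x - y) := by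
  have hx : 0 ≤ x := hy.trans hxy
  rw [← geom_sum₂_mul]
  apply mul_le_mul_of_nonneg_right _ (by linarith)
  calc ∑ i ∈ Finset.range n, x ^ i * y ^ (n - 1 - i)
      ≤ ∑ _i ∈ Finset.range n, x ^ (n - 1) := by
        apply Finset.sum_le_sum
        intro i hi
        have hi' : i ≤ n - 1 := Nat.le_sub_one_of_lt (Finset.mem_range.mp hi)
        calc x ^ i * y ^ (n - 1 - i) ≤ x ^ i * x ^ (n - 1 - i) := by
              apply mul_le_mul_of_nonneg_left _ (pow_nonneg hx i)
              exact pow_le_pow_left₀ hy hxy _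
          _ = x ^ (n - 1) := by rw [← pow_add]; congr 1; omega
    _ = (n : ℝ) * x ^ (n - 1) := by
        simp [Finset.sum_const, Finset.card_range, nsmul_eq_mul]

lemma volume_annulus_le {n : ℕ} (hn : 1 ≤ n) {a Λ : ℝ} (ha : 0 ≤ a) (hΛ : 0 ≤ Λ) :
    volume {y : EuclideanSpace ℝ (Fin n) | a ≤ ‖y‖ ∧ ‖y‖ ≤ a + Λ}
      ≤ ENNReal.ofReal ((n : ℝ) * (a + Λ) ^ (n - 1) * Λ) *
        volume (ball (0 : EuclideanSpace ℝ (Fin n)) 1) := by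
  haveI : Nonempty (Fin n) := Fin.pos_iff_nonempty.mp hn
  haveI : Nontrivial (EuclideanSpace ℝ (Fin n)) := inferInstance
  set V := volume (ball (0 : EuclideanSpace ℝ (Fin n)) 1)
  have hset : {y : EuclideanSpace ℝ (Fin n) | a ≤ ‖y‖ ∧ ‖y‖ ≤ a + Λ}
      = closedBall (0 : EuclideanSpace ℝ (Fin n)) (a + Λ) \ ball 0 a := by
    ext y
    simp only [Set.mem_setOf_eq, Set.mem_diff, mem_closedBall_zero_iff, mem_ball_zero_iff,
      not_lt]
    tauto
  rw [hset]
  have hsub : ball (0 : EuclideanSpace ℝ (Fin n)) a ⊆ closedBall 0 (a + Λ) :=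
    (ball_subset_closedBall).trans (closedBall_subset_closedBall (by linarith))
  rw [measure_diff hsub measurableSet_ball.nullMeasurableSet measure_ball_lt_top.ne]
  have hcb : volume (closedBall (0 : EuclideanSpace ℝ (Fin n)) (a + Λ))
      = ENNReal.ofReal ((a + Λ) ^ n) * V := by
    rw [Measure.addHaar_closedBall _ _ (by linarith), finrank_euclideanSpace_fin]
  have hb : volume (ball (0 : EuclideanSpace ℝ (Fin n)) a)
      = ENNReal.ofReal (a ^ n) * V := by
    rw [Measure.addHaar_ball _ _ ha, finrank_euclideanSpace_fin]
  rw [hcb, hb]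
  rw [tsub_le_iff_right, ← add_mul]
  apply mul_le_mul_of_nonneg_right _ zero_le
  rw [← ENNReal.ofReal_add (by positivity) (by positivity)]
  apply ENNReal.ofReal_le_ofReal
  have := pow_sub_pow_le (x := a + Λ) (y := a) n ha (by linarith)
  have h2 : a + Λ - a = Λ := by ring
  rw [h2] at this
  linarith

lemma annulus_measurable {n : ℕ} {a Λ : ℝ} :
    MeasurableSet {y : EuclideanSpace ℝ (Fin n) | a ≤ ‖y‖ ∧ ‖y‖ ≤ a + Λ} := by
  have : {y : EuclideanSpace ℝ (Fin n) | a ≤ ‖y‖ ∧ ‖y‖ ≤ a + Λ}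
      = closedBall (0 : EuclideanSpace ℝ (Fin n)) (a + Λ) \ ball 0 a := by
    ext y
    simp only [Set.mem_setOf_eq, Set.mem_diff, mem_closedBall_zero_iff, mem_ball_zero_iff,
      not_lt]
    tauto
  rw [this]
  exact measurableSet_closedBall.diff measurableSet_ball

/-- The constant in the slab estimate. -/
def slabC (n : ℕ) (α : ℝ) : ℝ≥0∞ :=
  (Real.toNNReal (max (2 * 2 ^ α⁻¹ + α⁻¹) 1) : ℝ≥0∞) ^ (n : ℝ) *
    (Real.toNNReal (Real.sqrt n) : ℝ≥0∞) ^ (n : ℝ) *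
    ENNReal.ofReal ((n : ℝ) * 2 ^ (n - 1)) *
    volume (ball (0 : EuclideanSpace ℝ (Fin n)) 1)

lemma slabC_ne_top (n : ℕ) (α : ℝ) : slabC n α ≠ ∞ := by
  unfold slabC
  refine ENNReal.mul_ne_top (ENNReal.mul_ne_top (ENNReal.mul_ne_top ?_ ?_) ?_) ?_
  · exact (ENNReal.rpow_ne_top_of_nonneg (Nat.cast_nonneg n) ENNReal.coe_ne_top)
  · exact (ENNReal.rpow_ne_top_of_nonneg (Nat.cast_nonneg n) ENNReal.coe_ne_top)
  · exact ENNReal.ofReal_ne_top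
  · exact measure_ball_lt_top.ne

/-- The key slab estimate: the part of the graph of `‖·‖ ^ α` with heights in
`[t₀, t₀ + Λ]` has Hausdorff measure controlled by `(t₀ ^ α⁻¹) ^ (n-1) * Λ`. -/
lemma slab_bound {n : ℕ} (hn : 1 ≤ n) {α t₀ Λ : ℝ} (hα : 0 < α)
    (ht₀ : 0 < t₀) (hΛ0 : 0 < Λ) (hΛt : Λ ≤ t₀) (hΛa : Λ ≤ t₀ ^ α⁻¹)
    (hreg : ∀ s ∈ Set.Icc t₀ (t₀ + Λ), s ^ (α⁻¹ - 1) ≤ 1) :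
    μH[(n : ℝ)] {p : EuclideanSpace ℝ (Fin n) × ℝ |
        p.2 = ‖p.1‖ ^ α ∧ t₀ ≤ p.2 ∧ p.2 ≤ t₀ + Λ}
      ≤ slabC n α * ENNReal.ofReal ((t₀ ^ α⁻¹) ^ (n - 1) * Λ) := by
  set β := α⁻¹ with hβ
  have hβ0 : 0 < β := inv_pos.mpr hα
  set a₀ := t₀ ^ β with ha₀def
  have ha₀ : 0 < a₀ := Real.rpow_pos_of_pos ht₀ β
  set A : Set (EuclideanSpace ℝ (Fin n)) := {y | a₀ ≤ ‖y‖ ∧ ‖y‖ ≤ a₀ + Λ} with hA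
  set M : EuclideanSpace ℝ (Fin n) → EuclideanSpace ℝ (Fin n) × ℝ :=
    fun y => (((t₀ + (‖y‖ - a₀)) ^ β / ‖y‖) • y, t₀ + (‖y‖ - a₀)) with hM
  -- basic facts
  have hψmem : ∀ y ∈ A, t₀ + (‖y‖ - a₀) ∈ Set.Icc t₀ (t₀ + Λ) := by
    rintro y ⟨h1, h2⟩
    constructor <;> [linarith; linarith]
  have hψpos : ∀ s ∈ Set.Icc t₀ (t₀ + Λ), 0 < s := fun s hs => lt_of_lt_of_le ht₀ hs.1
  have hφle : ∀ s ∈ Set.Icc t₀ (t₀ + Λ), s ^ β ≤ 2 ^ β * a₀ := by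
    intro s hs
    have h1 : s ^ β ≤ (2 * t₀) ^ β := by
      apply Real.rpow_le_rpow (le_of_lt (hψpos s hs)) _ (le_of_lt hβ0)
      linarith [hs.2]
    rwa [Real.mul_rpow (by norm_num) ht₀.le] at h1
  -- the covering claim
  have hcover : {p : EuclideanSpace ℝ (Fin n) × ℝ |
      p.2 = ‖p.1‖ ^ α ∧ t₀ ≤ p.2 ∧ p.2 ≤ t₀ + Λ} ⊆ M '' A := by
    rintro ⟨x, t⟩ ⟨hgraph, hge, hle⟩
    simp only at hgraph hge hle
    have htpos : 0 < t := lt_of_lt_of_le ht₀ hge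
    have hxne : ‖x‖ ≠ 0 := by
      intro h
      rw [h, Real.zero_rpow hα.ne'] at hgraph
      linarith
    have hxpos : 0 < ‖x‖ := lt_of_le_of_ne (norm_nonneg x) (Ne.symm hxne)
    have hxt : ‖x‖ = t ^ β := by
      rw [hgraph, hβ]
      exact (Real.rpow_rpow_inv (norm_nonneg x) hα.ne').symm
    have hspos : 0 < a₀ + (t - t₀) := by linarith
    refine ⟨(((a₀ + (t - t₀)) / ‖x‖) • x), ?_, ?_⟩
    · have hnorm : ‖(((a₀ + (t - t₀)) / ‖x‖) • x)‖ = a₀ + (t - t₀) := by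
        rw [norm_smul, Real.norm_eq_abs, abs_of_nonneg (div_nonneg hspos.le (norm_nonneg x)), div_mul_cancel₀]
        exact hxne
      constructor
      · rw [hnorm]; linarith
      · rw [hnorm]; linarith
    · have hnorm : ‖(((a₀ + (t - t₀)) / ‖x‖) • x)‖ = a₀ + (t - t₀) := by
        rw [norm_smul, Real.norm_eq_abs, abs_of_nonneg (div_nonneg hspos.le (norm_nonneg x)), div_mul_cancel₀]
        exact hxne
      rw [hM]
      simp only [hnorm]
      have h2 : t₀ + (a₀ + (t - t₀) - a₀) = t := by ring
      rw [h2]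
      have h3 : (t ^ β / (a₀ + (t - t₀))) • ((a₀ + (t - t₀)) / ‖x‖) • x = x := by
        rw [smul_smul]
        have hs0 : a₀ + (t - t₀) ≠ 0 := ne_of_gt hspos
        rw [div_mul_div_comm, mul_comm (a₀ + (t - t₀)) ‖x‖, ← div_mul_div_comm,
          div_self hs0, mul_one, ← hxt, div_self hxne, one_smul]
      rw [Prod.mk.injEq]
      exact ⟨h3, rfl⟩
  -- Lipschitz estimate for M on A
  set K₀ : ℝ := 2 * 2 ^ β + β with hK₀
  have h2β : (0:ℝ) < 2 ^ β := Real.rpow_pos_of_pos (by norm_num) β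
  have hK₀pos : 0 < K₀ := by positivity
  set KK : ℝ := max K₀ 1 with hKKdef
  have hKK1 : 1 ≤ KK := le_max_right _ _
  have hKK0 : 0 ≤ KK := by linarith
  have hrpowlip := abs_rpow_sub_rpow_le (β := β) (A := t₀) (B := t₀ + Λ) ht₀.le
    (fun s hs => Or.inl (ne_of_gt (hψpos s hs))) hreg
  have hlip : LipschitzOnWith (Real.toNNReal KK) M A := by
    apply LipschitzOnWith.of_dist_le_mul
    rintro y ⟨hy1, hy2⟩ z ⟨hz1, hz2⟩
    rw [Real.coe_toNNReal _ hKK0]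
    have hsy0 : 0 < ‖y‖ := lt_of_lt_of_le ha₀ hy1
    have hsz0 : 0 < ‖z‖ := lt_of_lt_of_le ha₀ hz1
    have hψy := hψmem y ⟨hy1, hy2⟩
    have hψz := hψmem z ⟨hz1, hz2⟩
    set φy : ℝ := (t₀ + (‖y‖ - a₀)) ^ β with hφydef
    set φz : ℝ := (t₀ + (‖z‖ - a₀)) ^ β with hφzdef
    have hφy0 : 0 ≤ φy := Real.rpow_nonneg (hψpos _ hψy).le β
    have hφz0 : 0 ≤ φz := Real.rpow_nonneg (hψpos _ hψz).le β
    have hφyle : φy ≤ 2 ^ β * a₀ := hφle _ hψy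
    have hφsub : |φy - φz| ≤ β * |‖y‖ - ‖z‖| := by
      have h := hrpowlip _ hψy _ hψz
      have he : (t₀ + (‖y‖ - a₀)) - (t₀ + (‖z‖ - a₀)) = ‖y‖ - ‖z‖ := by ring
      rw [he, abs_of_pos hβ0] at h
      exact h
    have hnormsub : |‖y‖ - ‖z‖| ≤ dist y z := by
      rw [dist_eq_norm]; exact abs_norm_sub_norm_le y z
    have hdist2 : dist (t₀ + (‖y‖ - a₀)) (t₀ + (‖z‖ - a₀)) ≤ dist y z := by
      rw [Real.dist_eq]
      have he : (t₀ + (‖y‖ - a₀)) - (t₀ + (‖z‖ - a₀)) = ‖y‖ - ‖z‖ := by ring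
      rw [he]; exact hnormsub
    have hdist1 : dist ((φy / ‖y‖) • y) ((φz / ‖z‖) • z) ≤ K₀ * dist y z := by
      rw [dist_eq_norm]
      have key1 : (φy / ‖y‖) • y - (φz / ‖z‖) • z
          = (φy / ‖y‖) • (y - z) + ((φy / ‖y‖) - (φz / ‖z‖)) • z := by
        module
      rw [key1]
      have hb1 : ‖(φy / ‖y‖) • (y - z)‖ ≤ 2 ^ β * ‖y - z‖ := by
        rw [norm_smul, Real.norm_eq_abs, abs_of_nonneg (div_nonneg hφy0 hsy0.le)]
        apply mul_le_mul_of_nonneg_right _ (norm_nonneg _)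
        rw [div_le_iff₀ hsy0]
        calc φy ≤ 2 ^ β * a₀ := hφyle
          _ ≤ 2 ^ β * ‖y‖ := by
              exact mul_le_mul_of_nonneg_left hy1 h2β.le
      have hb2 : ‖((φy / ‖y‖) - (φz / ‖z‖)) • z‖ ≤ (2 ^ β + β) * |‖y‖ - ‖z‖| := by
        rw [norm_smul, Real.norm_eq_abs]
        have hre : ((φy / ‖y‖) - (φz / ‖z‖)) * ‖z‖
            = (φy * (‖z‖ - ‖y‖) + ‖y‖ * (φy - φz)) / ‖y‖ := by
          field_simp
          ring
        calc |(φy / ‖y‖) - (φz / ‖z‖)| * ‖z‖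
            = |((φy / ‖y‖) - (φz / ‖z‖)) * ‖z‖| := by
              rw [abs_mul, abs_of_nonneg (norm_nonneg z)]
          _ = |φy * (‖z‖ - ‖y‖) + ‖y‖ * (φy - φz)| / ‖y‖ := by
              rw [hre, abs_div, abs_of_nonneg hsy0.le]
          _ ≤ (φy * |‖y‖ - ‖z‖| + ‖y‖ * (β * |‖y‖ - ‖z‖|)) / ‖y‖ := by
              gcongr
              calc |φy * (‖z‖ - ‖y‖) + ‖y‖ * (φy - φz)|
                  ≤ |φy * (‖z‖ - ‖y‖)| + |‖y‖ * (φy - φz)| := abs_add_le _ _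
                _ ≤ φy * |‖y‖ - ‖z‖| + ‖y‖ * (β * |‖y‖ - ‖z‖|) := by
                    apply add_le_add
                    · rw [abs_mul, abs_of_nonneg hφy0, abs_sub_comm]
                    · rw [abs_mul, abs_of_nonneg (norm_nonneg y)]
                      exact mul_le_mul_of_nonneg_left hφsub (norm_nonneg y)
          _ ≤ (2 ^ β + β) * |‖y‖ - ‖z‖| := by
              rw [div_le_iff₀ hsy0]
              have hφy' : φy ≤ 2 ^ β * ‖y‖ :=
                hφyle.trans (mul_le_mul_of_nonneg_left hy1 h2β.le)
              have habs : 0 ≤ |‖y‖ - ‖z‖| := abs_nonneg _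
              nlinarith [mul_le_mul_of_nonneg_right hφy' habs]
      calc ‖(φy / ‖y‖) • (y - z) + ((φy / ‖y‖) - (φz / ‖z‖)) • z‖
          ≤ ‖(φy / ‖y‖) • (y - z)‖ + ‖((φy / ‖y‖) - (φz / ‖z‖)) • z‖ := norm_add_le _ _
        _ ≤ 2 ^ β * ‖y - z‖ + (2 ^ β + β) * |‖y‖ - ‖z‖| := add_le_add hb1 hb2
        _ ≤ 2 ^ β * dist y z + (2 ^ β + β) * dist y z := by
            rw [dist_eq_norm]
            exact add_le_add le_rfl (mul_le_mul_of_nonneg_left hnormsub (by positivity))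
        _ = K₀ * dist y z := by rw [hK₀]; ring
    calc dist (M y) (M z) = max (dist ((φy / ‖y‖) • y) ((φz / ‖z‖) • z))
          (dist (t₀ + (‖y‖ - a₀)) (t₀ + (‖z‖ - a₀))) := by
          rw [hM, Prod.dist_eq]
      _ ≤ KK * dist y z := by
          apply max_le
          · exact hdist1.trans (mul_le_mul_of_nonneg_right (le_max_left _ _) dist_nonneg)
          · calc dist (t₀ + (‖y‖ - a₀)) (t₀ + (‖z‖ - a₀)) ≤ dist y z := hdist2
              _ = 1 * dist y z := (one_mul _).symm
              _ ≤ KK * dist y z := mul_le_mul_of_nonneg_right hKK1 dist_nonneg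
  -- measure estimate
  have hn0 : (0:ℝ) ≤ (n:ℝ) := Nat.cast_nonneg n
  have hAmeas : MeasurableSet A := annulus_measurable
  have step1 : μH[(n : ℝ)] {p : EuclideanSpace ℝ (Fin n) × ℝ |
      p.2 = ‖p.1‖ ^ α ∧ t₀ ≤ p.2 ∧ p.2 ≤ t₀ + Λ} ≤
      (Real.toNNReal KK : ℝ≥0∞) ^ (n : ℝ) * μH[(n : ℝ)] A :=
    (measure_mono hcover).trans (hlip.hausdorffMeasure_image_le hn0)
  have step2 : μH[(n : ℝ)] A ≤ (Real.toNNReal (Real.sqrt n) : ℝ≥0∞) ^ (n : ℝ) * volume A :=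
    hausdorff_le_volume A hAmeas
  have step3 : volume A ≤ ENNReal.ofReal ((n : ℝ) * (a₀ + Λ) ^ (n - 1) * Λ) *
      volume (ball (0 : EuclideanSpace ℝ (Fin n)) 1) :=
    volume_annulus_le hn ha₀.le hΛ0.le
  have step4 : ENNReal.ofReal ((n : ℝ) * (a₀ + Λ) ^ (n - 1) * Λ)
      ≤ ENNReal.ofReal ((n : ℝ) * 2 ^ (n - 1)) * ENNReal.ofReal (a₀ ^ (n - 1) * Λ) := by
    rw [← ENNReal.ofReal_mul (by positivity)]
    apply ENNReal.ofReal_le_ofReal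
    have h1 : (a₀ + Λ) ^ (n - 1) ≤ 2 ^ (n - 1) * a₀ ^ (n - 1) := by
      rw [← mul_pow]
      apply pow_le_pow_left₀ (by linarith)
      linarith
    calc (n : ℝ) * (a₀ + Λ) ^ (n - 1) * Λ
        ≤ (n : ℝ) * (2 ^ (n - 1) * a₀ ^ (n - 1)) * Λ := by
          apply mul_le_mul_of_nonneg_right _ hΛ0.le
          exact mul_le_mul_of_nonneg_left h1 hn0
      _ = (n : ℝ) * 2 ^ (n - 1) * (a₀ ^ (n - 1) * Λ) := by ring
  have hKKle : (Real.toNNReal KK : ℝ≥0∞) ^ (n : ℝ)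
      ≤ (Real.toNNReal (max (2 * 2 ^ α⁻¹ + α⁻¹) 1) : ℝ≥0∞) ^ (n : ℝ) := by
    exact le_rfl
  calc μH[(n : ℝ)] {p : EuclideanSpace ℝ (Fin n) × ℝ |
      p.2 = ‖p.1‖ ^ α ∧ t₀ ≤ p.2 ∧ p.2 ≤ t₀ + Λ}
      ≤ (Real.toNNReal KK : ℝ≥0∞) ^ (n : ℝ) * μH[(n : ℝ)] A := step1
    _ ≤ (Real.toNNReal KK : ℝ≥0∞) ^ (n : ℝ) *
        ((Real.toNNReal (Real.sqrt n) : ℝ≥0∞) ^ (n : ℝ) *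
          (ENNReal.ofReal ((n : ℝ) * 2 ^ (n - 1)) * ENNReal.ofReal (a₀ ^ (n - 1) * Λ) *
            volume (ball (0 : EuclideanSpace ℝ (Fin n)) 1))) := by
        apply mul_le_mul_right (step2.trans (mul_le_mul_right (step3.trans
          (mul_le_mul_left step4 _)) _))
    _ = (Real.toNNReal KK : ℝ≥0∞) ^ (n : ℝ) *
        (Real.toNNReal (Real.sqrt n) : ℝ≥0∞) ^ (n : ℝ) *
        ENNReal.ofReal ((n : ℝ) * 2 ^ (n - 1)) *
        volume (ball (0 : EuclideanSpace ℝ (Fin n)) 1) *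
        ENNReal.ofReal (a₀ ^ (n - 1) * Λ) := by ring
    _ ≤ slabC n α * ENNReal.ofReal (a₀ ^ (n - 1) * Λ) := by
        unfold slabC
        apply mul_le_mul_left
        exact mul_le_mul_left (mul_le_mul_left (mul_le_mul_left hKKle _) _) _

/-- Constant bounding the measure of the inner part of the graph. -/
def innerC (n : ℕ) (α : ℝ) : ℝ≥0∞ :=
  (Real.toNNReal (max α 1) : ℝ≥0∞) ^ (n : ℝ) *
    (Real.toNNReal (Real.sqrt n) : ℝ≥0∞) ^ (n : ℝ) *
    volume (closedBall (0 : EuclideanSpace ℝ (Fin n)) 1)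

lemma innerC_ne_top (n : ℕ) (α : ℝ) : innerC n α ≠ ∞ := by
  unfold innerC
  refine ENNReal.mul_ne_top (ENNReal.mul_ne_top ?_ ?_) ?_
  · exact ENNReal.rpow_ne_top_of_nonneg (Nat.cast_nonneg n) ENNReal.coe_ne_top
  · exact ENNReal.rpow_ne_top_of_nonneg (Nat.cast_nonneg n) ENNReal.coe_ne_top
  · exact measure_closedBall_lt_top.ne

lemma inner_bound {n : ℕ} {α : ℝ} (hα : 1 ≤ α) :
    μH[(n : ℝ)] {p : EuclideanSpace ℝ (Fin n) × ℝ | p.2 = ‖p.1‖ ^ α ∧ ‖p.1‖ ≤ 1}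
      ≤ innerC n α := by
  set g : EuclideanSpace ℝ (Fin n) → EuclideanSpace ℝ (Fin n) × ℝ :=
    fun x => (x, ‖x‖ ^ α) with hg
  have hα0 : 0 < α := lt_of_lt_of_le one_pos hα
  have hcover : {p : EuclideanSpace ℝ (Fin n) × ℝ | p.2 = ‖p.1‖ ^ α ∧ ‖p.1‖ ≤ 1}
      ⊆ g '' closedBall 0 1 := by
    rintro ⟨x, t⟩ ⟨h1, h2⟩
    refine ⟨x, by rwa [mem_closedBall_zero_iff], ?_⟩
    simp only at h1
    simp only [hg, h1]
  have hrlip := abs_rpow_sub_rpow_le (β := α) (A := 0) (B := 1) le_rfl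
    (fun s _ => Or.inr hα)
    (fun s hs => Real.rpow_le_one hs.1 hs.2 (by linarith))
  have hlip : LipschitzOnWith (Real.toNNReal (max α 1)) g (closedBall 0 1) := by
    apply LipschitzOnWith.of_dist_le_mul
    intro x hx y hy
    rw [mem_closedBall_zero_iff] at hx hy
    rw [Real.coe_toNNReal _ (by positivity), hg, Prod.dist_eq]
    apply max_le
    · calc dist x y = 1 * dist x y := (one_mul _).symm
        _ ≤ max α 1 * dist x y := mul_le_mul_of_nonneg_right (le_max_right _ _) dist_nonneg
    · rw [Real.dist_eq]
      calc |‖x‖ ^ α - ‖y‖ ^ α| ≤ |α| * |‖x‖ - ‖y‖| :=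
            hrlip _ ⟨norm_nonneg x, hx⟩ _ ⟨norm_nonneg y, hy⟩
        _ = α * |‖x‖ - ‖y‖| := by rw [abs_of_pos hα0]
        _ ≤ max α 1 * dist x y := by
            apply mul_le_mul (le_max_left _ _) _ (abs_nonneg _) (by positivity)
            rw [dist_eq_norm]
            exact abs_norm_sub_norm_le x y
  calc μH[(n : ℝ)] {p : EuclideanSpace ℝ (Fin n) × ℝ | p.2 = ‖p.1‖ ^ α ∧ ‖p.1‖ ≤ 1}
      ≤ μH[(n : ℝ)] (g '' closedBall 0 1) := measure_mono hcover
    _ ≤ (Real.toNNReal (max α 1) : ℝ≥0∞) ^ (n : ℝ) * μH[(n : ℝ)] (closedBall 0 1) :=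
        hlip.hausdorffMeasure_image_le (Nat.cast_nonneg n)
    _ ≤ (Real.toNNReal (max α 1) : ℝ≥0∞) ^ (n : ℝ) *
        ((Real.toNNReal (Real.sqrt n) : ℝ≥0∞) ^ (n : ℝ) *
          volume (closedBall (0 : EuclideanSpace ℝ (Fin n)) 1)) := by
        exact mul_le_mul_right (hausdorff_le_volume _ measurableSet_closedBall) _
    _ = innerC n α := by unfold innerC; ring

/-- Measure bound in the case `α > 1`, for `r ≥ 2`. -/
lemma measure_bound_gt {n : ℕ} (hn : 1 ≤ n) {α : ℝ} (hα1 : 1 < α) {r : ℝ} (hr : 2 ≤ r) :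
    μH[(n : ℝ)] (ball (0 : EuclideanSpace ℝ (Fin n) × ℝ) r ∩ graphAlpha n α)
      ≤ innerC n α + slabC n α *
        ENNReal.ofReal ((2 * r) * ((2 * r) ^ α⁻¹) ^ (n - 1)) := by
  have hα0 : 0 < α := lt_trans one_pos hα1
  have hβ0 : 0 < α⁻¹ := inv_pos.mpr hα0
  have hβ1 : α⁻¹ < 1 := by
    rw [inv_lt_one_iff₀]; right; exact hα1
  set N := ⌈r⌉₊ with hN
  have hrN : r ≤ N := Nat.le_ceil r
  have hN2r : (N : ℝ) ≤ 2 * r := by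
    have := Nat.ceil_lt_add_one (by linarith : (0:ℝ) ≤ r)
    rw [hN]; linarith
  have hcover : ball (0 : EuclideanSpace ℝ (Fin n) × ℝ) r ∩ graphAlpha n α ⊆
      {p : EuclideanSpace ℝ (Fin n) × ℝ | p.2 = ‖p.1‖ ^ α ∧ ‖p.1‖ ≤ 1} ∪
      ⋃ k ∈ Finset.Icc 1 N, {p : EuclideanSpace ℝ (Fin n) × ℝ |
        p.2 = ‖p.1‖ ^ α ∧ (k : ℝ) ≤ p.2 ∧ p.2 ≤ (k : ℝ) + 1} := by
    rintro ⟨x, t⟩ ⟨hball, hgraph⟩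
    simp only [graphAlpha, Set.mem_setOf_eq] at hgraph
    rw [mem_ball_zero_iff, Prod.norm_def] at hball
    simp only [max_lt_iff] at hball
    obtain ⟨hx, ht⟩ := hball
    by_cases hx1 : ‖x‖ ≤ 1
    · left; exact ⟨hgraph, hx1⟩
    · right
      push_neg at hx1
      have ht1 : 1 < t := by
        rw [hgraph]
        exact Real.one_lt_rpow_iff_of_pos (by linarith) |>.mpr (Or.inl ⟨hx1, hα0⟩)
      have ht0 : 0 ≤ t := by linarith
      set k := ⌊t⌋₊ with hk
      have hk1 : 1 ≤ k := Nat.le_floor (by exact_mod_cast ht1.le)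
      have hkt : (k : ℝ) ≤ t := Nat.floor_le ht0
      have htk : t ≤ (k : ℝ) + 1 := (Nat.lt_floor_add_one t).le
      have hkN : k ≤ N := by
        have h1 : (k : ℝ) < N := lt_of_le_of_lt hkt (lt_of_lt_of_le (lt_of_abs_lt ht) hrN)
        exact_mod_cast h1.le.trans le_rfl |>.trans le_rfl |>.trans le_rfl |>.trans le_rfl
      refine Set.mem_biUnion (s := ((Finset.Icc 1 N : Finset ℕ) : Set ℕ))
        (Finset.mem_coe.mpr (Finset.mem_Icc.mpr ⟨hk1, hkN⟩)) ⟨hgraph, hkt, htk⟩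
  calc μH[(n : ℝ)] (ball (0 : EuclideanSpace ℝ (Fin n) × ℝ) r ∩ graphAlpha n α)
      ≤ μH[(n : ℝ)] ({p : EuclideanSpace ℝ (Fin n) × ℝ | p.2 = ‖p.1‖ ^ α ∧ ‖p.1‖ ≤ 1}) +
        μH[(n : ℝ)] (⋃ k ∈ Finset.Icc 1 N, {p : EuclideanSpace ℝ (Fin n) × ℝ |
          p.2 = ‖p.1‖ ^ α ∧ (k : ℝ) ≤ p.2 ∧ p.2 ≤ (k : ℝ) + 1}) :=
        (measure_mono hcover).trans (measure_union_le _ _)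
    _ ≤ innerC n α + slabC n α *
        ENNReal.ofReal ((2 * r) * ((2 * r) ^ α⁻¹) ^ (n - 1)) := by
      apply add_le_add (inner_bound hα1.le)
      calc μH[(n : ℝ)] (⋃ k ∈ Finset.Icc 1 N, {p : EuclideanSpace ℝ (Fin n) × ℝ |
            p.2 = ‖p.1‖ ^ α ∧ (k : ℝ) ≤ p.2 ∧ p.2 ≤ (k : ℝ) + 1})
          ≤ ∑ k ∈ Finset.Icc 1 N, μH[(n : ℝ)] {p : EuclideanSpace ℝ (Fin n) × ℝ |
            p.2 = ‖p.1‖ ^ α ∧ (k : ℝ) ≤ p.2 ∧ p.2 ≤ (k : ℝ) + 1} :=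
            measure_biUnion_finset_le _ _
        _ ≤ ∑ _k ∈ Finset.Icc 1 N, slabC n α *
            ENNReal.ofReal (((2 * r) ^ α⁻¹) ^ (n - 1)) := by
            apply Finset.sum_le_sum
            intro k hk
            rw [Finset.mem_Icc] at hk
            have hk1 : (1 : ℝ) ≤ (k : ℝ) := by exact_mod_cast hk.1
            have hbd := slab_bound hn hα0 (t₀ := (k : ℝ)) (Λ := 1)
              (by linarith) one_pos hk1
              (Real.one_le_rpow hk1 hβ0.le)
              (fun s hs => Real.rpow_le_one_of_one_le_of_nonpos
                (by linarith [hs.1]) (by linarith))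
            apply hbd.trans
            apply mul_le_mul_right
            apply ENNReal.ofReal_le_ofReal
            rw [mul_one]
            apply pow_le_pow_left₀ (Real.rpow_nonneg (by linarith) _)
            apply Real.rpow_le_rpow (by linarith) _ hβ0.le
            calc (k : ℝ) ≤ N := by exact_mod_cast hk.2
              _ ≤ 2 * r := hN2r
        _ ≤ slabC n α * ENNReal.ofReal ((2 * r) * ((2 * r) ^ α⁻¹) ^ (n - 1)) := by
            rw [Finset.sum_const]
            rw [nsmul_eq_mul]
            have hcard : (Finset.Icc 1 N).card = N := by
              rw [Nat.card_Icc]; omega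
            rw [hcard]
            calc (N : ℝ≥0∞) * (slabC n α * ENNReal.ofReal (((2 * r) ^ α⁻¹) ^ (n - 1)))
                = slabC n α * ((N : ℝ≥0∞) * ENNReal.ofReal (((2 * r) ^ α⁻¹) ^ (n - 1))) := by
                  ring
              _ ≤ slabC n α * ENNReal.ofReal ((2 * r) * ((2 * r) ^ α⁻¹) ^ (n - 1)) := by
                  apply mul_le_mul_right
                  rw [← ENNReal.ofReal_natCast N, ← ENNReal.ofReal_mul (Nat.cast_nonneg N)]
                  apply ENNReal.ofReal_le_ofReal
                  apply mul_le_mul_of_nonneg_right hN2r (by positivity)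

/-- Constant for the level estimate in the case `α < 1`. -/
def levC (n : ℕ) (α : ℝ) : ℝ≥0∞ :=
  slabC n α * ENNReal.ofReal (2 * 4 ^ (α⁻¹ * ((n : ℝ) - 1)))

/-- Level estimate for `α < 1`: the part of the graph with heights in `[T, 2T]`. -/
lemma level_bound {n : ℕ} (hn : 1 ≤ n) {α T : ℝ} (hα0 : 0 < α) (hα1 : α < 1)
    (hT0 : 0 < T) (hT : 4 * T ≤ 1) :
    μH[(n : ℝ)] {p : EuclideanSpace ℝ (Fin n) × ℝ |
        p.2 = ‖p.1‖ ^ α ∧ T ≤ p.2 ∧ p.2 ≤ 2 * T}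
      ≤ levC n α * (ENNReal.ofReal (T ^ (1 + α⁻¹ * ((n : ℝ) - 1)))
          + ENNReal.ofReal (T ^ (α⁻¹ * (n : ℝ)))) := by
  set β := α⁻¹ with hβ
  have hβ1 : 1 < β := one_lt_inv_iff₀.mpr ⟨hα0, hα1⟩
  have hβ0 : 0 < β := lt_trans one_pos hβ1
  have hT1 : T ≤ 1 := by linarith
  set δ := T ^ β with hδ
  have hδ0 : 0 < δ := Real.rpow_pos_of_pos hT0 β
  have hδT : δ ≤ T := by
    calc δ = T ^ β := rfl
      _ ≤ T ^ (1 : ℝ) := Real.rpow_le_rpow_of_exponent_ge hT0 hT1 hβ1.le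
      _ = T := Real.rpow_one T
  set M := ⌈T / δ⌉₊ with hM
  have hMle : (M : ℝ) ≤ T / δ + 1 := (Nat.ceil_lt_add_one (by positivity)).le
  -- cover of the level by the slabs
  have hcover : {p : EuclideanSpace ℝ (Fin n) × ℝ |
      p.2 = ‖p.1‖ ^ α ∧ T ≤ p.2 ∧ p.2 ≤ 2 * T} ⊆
      ⋃ m ∈ Finset.range (M + 1), {p : EuclideanSpace ℝ (Fin n) × ℝ |
        p.2 = ‖p.1‖ ^ α ∧ T + m * δ ≤ p.2 ∧ p.2 ≤ T + m * δ + δ} := by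
    rintro ⟨x, t⟩ ⟨hgraph, hge, hle⟩
    simp only [Set.mem_setOf_eq] at hgraph hge hle
    set m := ⌊(t - T) / δ⌋₊ with hm
    have htT : 0 ≤ (t - T) / δ := div_nonneg (by linarith) hδ0.le
    have hmle : m ≤ M := by
      apply le_trans (Nat.floor_le_floor (by gcongr; linarith : (t - T) / δ ≤ T / δ))
      exact Nat.floor_le_ceil _
    refine Set.mem_biUnion (s := ((Finset.range (M + 1) : Finset ℕ) : Set ℕ))
      (Finset.mem_coe.mpr (Finset.mem_range.mpr (Nat.lt_succ_of_le hmle))) ?_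
    refine ⟨hgraph, ?_, ?_⟩
    · have : (m : ℝ) ≤ (t - T) / δ := Nat.floor_le htT
      have := (le_div_iff₀ hδ0).mp this
      simp only [Set.mem_setOf_eq]
      linarith
    · have : (t - T) / δ < m + 1 := Nat.lt_floor_add_one _
      have := (div_lt_iff₀ hδ0).mp this
      simp only [Set.mem_setOf_eq]
      nlinarith
  -- estimate of each slab
  have hslab : ∀ m ∈ Finset.range (M + 1),
      μH[(n : ℝ)] {p : EuclideanSpace ℝ (Fin n) × ℝ |
        p.2 = ‖p.1‖ ^ α ∧ T + m * δ ≤ p.2 ∧ p.2 ≤ T + m * δ + δ}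
      ≤ slabC n α * ENNReal.ofReal (((4 * T) ^ β) ^ (n - 1) * δ) := by
    intro m hm
    rw [Finset.mem_range] at hm
    have hmM : (m : ℝ) ≤ M := by exact_mod_cast Nat.lt_succ_iff.mp hm
    have hmδ : (m : ℝ) * δ ≤ T + δ := by
      calc (m : ℝ) * δ ≤ (T / δ + 1) * δ := by
            apply mul_le_mul_of_nonneg_right (hmM.trans hMle) hδ0.le
        _ = T + δ := by field_simp
    have ht₀0 : 0 < T + (m : ℝ) * δ := by positivity
    have ht₀le : T + (m : ℝ) * δ + δ ≤ 4 * T := by linarith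
    have hbd := slab_bound hn hα0 (t₀ := T + m * δ) (Λ := δ) ht₀0 hδ0
      (by
        have h0 : 0 ≤ (m : ℝ) * δ := by positivity
        linarith)
      (by
        have h0 : 0 ≤ (m : ℝ) * δ := by positivity
        calc δ = T ^ β := rfl
          _ ≤ (T + m * δ) ^ β := Real.rpow_le_rpow hT0.le (by linarith) hβ0.le)
      (by intro s hs
          apply Real.rpow_le_one (le_of_lt (lt_of_lt_of_le ht₀0 hs.1)) _ (by linarith)
          calc s ≤ T + m * δ + δ := hs.2
            _ ≤ 4 * T := ht₀le
            _ ≤ 1 := hT)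
    apply hbd.trans
    apply mul_le_mul_right
    apply ENNReal.ofReal_le_ofReal
    apply mul_le_mul_of_nonneg_right _ hδ0.le
    apply pow_le_pow_left₀ (Real.rpow_nonneg ht₀0.le β)
    apply Real.rpow_le_rpow ht₀0.le (by linarith) hβ0.le
  -- summation
  calc μH[(n : ℝ)] {p : EuclideanSpace ℝ (Fin n) × ℝ |
      p.2 = ‖p.1‖ ^ α ∧ T ≤ p.2 ∧ p.2 ≤ 2 * T}
      ≤ ∑ m ∈ Finset.range (M + 1), μH[(n : ℝ)] {p : EuclideanSpace ℝ (Fin n) × ℝ |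
        p.2 = ‖p.1‖ ^ α ∧ T + m * δ ≤ p.2 ∧ p.2 ≤ T + m * δ + δ} :=
      (measure_mono hcover).trans (measure_biUnion_finset_le _ _)
    _ ≤ ∑ _m ∈ Finset.range (M + 1),
        slabC n α * ENNReal.ofReal (((4 * T) ^ β) ^ (n - 1) * δ) :=
      Finset.sum_le_sum hslab
    _ = ((M : ℝ≥0∞) + 1) * (slabC n α * ENNReal.ofReal (((4 * T) ^ β) ^ (n - 1) * δ)) := by
        rw [Finset.sum_const, Finset.card_range, nsmul_eq_mul]
        push_cast
        ring
    _ ≤ levC n α * (ENNReal.ofReal (T ^ (1 + α⁻¹ * ((n : ℝ) - 1)))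
          + ENNReal.ofReal (T ^ (α⁻¹ * (n : ℝ)))) := by
        rw [levC]
        have hM1 : ((M : ℝ≥0∞) + 1) = ENNReal.ofReal ((M : ℝ) + 1) := by
          rw [ENNReal.ofReal_add (Nat.cast_nonneg M) zero_le_one, ENNReal.ofReal_natCast,
            ENNReal.ofReal_one]
        set ν : ℝ := (n : ℝ) - 1 with hνdef
        have hν : ((n - 1 : ℕ) : ℝ) = ν := by
          rw [Nat.cast_sub hn]; simp [hνdef]
        have h4T : ((4 * T) ^ β) ^ (n - 1) = 4 ^ (β * ν) * T ^ (β * ν) := by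
          rw [← Real.rpow_natCast ((4 * T) ^ β) (n - 1),
            ← Real.rpow_mul (by positivity : (0:ℝ) ≤ 4 * T), hν,
            Real.mul_rpow (by norm_num : (0:ℝ) ≤ 4) hT0.le]
        have e1 : T ^ (1 - β) * T ^ (β * ν) * T ^ β = T ^ (1 + β * ν) := by
          rw [← Real.rpow_add hT0, ← Real.rpow_add hT0]
          congr 1; ring
        have e2 : T ^ (β * ν) * T ^ β = T ^ (β * (n : ℝ)) := by
          rw [← Real.rpow_add hT0]
          congr 1; rw [hνdef]; ring
        have hTδ : T / δ = T ^ (1 - β) := by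
          rw [hδ, Real.rpow_sub hT0, Real.rpow_one]
        have hM2 : (M : ℝ) + 1 ≤ T ^ (1 - β) + 2 := by
          rw [← hTδ]; linarith
        have hreal : ((M : ℝ) + 1) * (((4 * T) ^ β) ^ (n - 1) * δ)
            ≤ (2 * 4 ^ (β * ν)) * (T ^ (1 + β * ν) + T ^ (β * (n : ℝ))) := by
          have hp1 : (0:ℝ) ≤ T ^ (1 + β * ν) := Real.rpow_nonneg hT0.le _
          have hp2 : (0:ℝ) ≤ T ^ (β * (n : ℝ)) := Real.rpow_nonneg hT0.le _
          have hp3 : (0:ℝ) ≤ 4 ^ (β * ν) := Real.rpow_nonneg (by norm_num) _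
          calc ((M : ℝ) + 1) * (((4 * T) ^ β) ^ (n - 1) * δ)
              ≤ (T ^ (1 - β) + 2) * (((4 * T) ^ β) ^ (n - 1) * δ) := by
                apply mul_le_mul_of_nonneg_right hM2
                have : (0:ℝ) ≤ ((4 * T) ^ β) ^ (n - 1) :=
                  pow_nonneg (Real.rpow_nonneg (by positivity) _) _
                positivity
            _ = 4 ^ (β * ν) * (T ^ (1 - β) * T ^ (β * ν) * T ^ β
                  + 2 * (T ^ (β * ν) * T ^ β)) := by
                rw [h4T, hδ]; ring
            _ = 4 ^ (β * ν) * (T ^ (1 + β * ν) + 2 * T ^ (β * (n : ℝ))) := by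
                rw [e1, e2]
            _ ≤ (2 * 4 ^ (β * ν)) * (T ^ (1 + β * ν) + T ^ (β * (n : ℝ))) := by
                nlinarith
        calc ((M : ℝ≥0∞) + 1) * (slabC n α * ENNReal.ofReal (((4 * T) ^ β) ^ (n - 1) * δ))
            = slabC n α * ENNReal.ofReal (((M : ℝ) + 1) * (((4 * T) ^ β) ^ (n - 1) * δ)) := by
              rw [hM1, ENNReal.ofReal_mul (by positivity : (0:ℝ) ≤ (M : ℝ) + 1)]
              ring
          _ ≤ slabC n α * ENNReal.ofReal ((2 * 4 ^ (β * ν)) *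
                (T ^ (1 + β * ν) + T ^ (β * (n : ℝ)))) := by
              exact mul_le_mul_right (ENNReal.ofReal_le_ofReal hreal) _
          _ = slabC n α * ENNReal.ofReal (2 * 4 ^ (β * ν)) *
                (ENNReal.ofReal (T ^ (1 + β * ν)) + ENNReal.ofReal (T ^ (β * (n : ℝ)))) := by
              rw [ENNReal.ofReal_mul (by positivity), ENNReal.ofReal_add
                (Real.rpow_nonneg hT0.le _) (Real.rpow_nonneg hT0.le _)]
              ring

lemma measure_bound_lt {n : ℕ} (hn : 1 ≤ n) {α : ℝ} (hα0 : 0 < α) (hα1 : α < 1)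
    {r : ℝ} (hr0 : 0 < r) (hr : r ≤ 1 / 2) :
    μH[(n : ℝ)] (ball (0 : EuclideanSpace ℝ (Fin n) × ℝ) r ∩ graphAlpha n α)
      ≤ levC n α * 2 * (ENNReal.ofReal (r ^ (1 + α⁻¹ * ((n : ℝ) - 1)))
          + ENNReal.ofReal (r ^ (α⁻¹ * (n : ℝ)))) := by
  have hβ1 : 1 < α⁻¹ := one_lt_inv_iff₀.mpr ⟨hα0, hα1⟩
  have hn1 : (1 : ℝ) ≤ (n : ℝ) := by exact_mod_cast hn
  have hγ₁1 : 1 ≤ 1 + α⁻¹ * ((n : ℝ) - 1) := by nlinarith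
  have hγ₂1 : 1 ≤ α⁻¹ * (n : ℝ) := by nlinarith
  set T : ℕ → ℝ := fun j => r / 2 ^ (j + 1) with hT
  have hT0 : ∀ j, 0 < T j := fun j => by rw [hT]; positivity
  have hT4 : ∀ j, 4 * T j ≤ 1 := by
    intro j
    have h2 : (2:ℝ) ≤ 2 ^ (j + 1) := by
      calc (2:ℝ) = 2 ^ 1 := (pow_one 2).symm
        _ ≤ 2 ^ (j + 1) := pow_le_pow_right₀ one_le_two (by omega)
    have hTj : T j ≤ r / 2 := by
      rw [hT]
      apply div_le_div_of_nonneg_left hr0.le two_pos h2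
    linarith
  have hcover : ball (0 : EuclideanSpace ℝ (Fin n) × ℝ) r ∩ graphAlpha n α ⊆
      {((0 : EuclideanSpace ℝ (Fin n)), (0 : ℝ))} ∪
        ⋃ j : ℕ, {p : EuclideanSpace ℝ (Fin n) × ℝ |
          p.2 = ‖p.1‖ ^ α ∧ T j ≤ p.2 ∧ p.2 ≤ 2 * T j} := by
    rintro ⟨x, t⟩ ⟨hball, hgraph⟩
    simp only [graphAlpha, Set.mem_setOf_eq] at hgraph
    rw [mem_ball_zero_iff, Prod.norm_def, max_lt_iff] at hball
    obtain ⟨hx, ht⟩ := hball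
    simp only at hx ht hgraph
    have ht0 : 0 ≤ t := hgraph ▸ Real.rpow_nonneg (norm_nonneg x) α
    rcases eq_or_lt_of_le ht0 with h0 | htpos
    · left
      have hx0 : ‖x‖ = 0 := by
        have h1 : ‖x‖ ^ α = 0 := by rw [← hgraph, ← h0]
        exact ((Real.rpow_eq_zero_iff_of_nonneg (norm_nonneg x)).mp h1).1
      simp only [Set.mem_singleton_iff, Prod.mk.injEq]
      exact ⟨norm_eq_zero.mp hx0, h0.symm⟩
    · right
      have htr : t < r := lt_of_abs_lt ht
      have hq1 : 1 < r / t := (one_lt_div htpos).mpr htr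
      set k := ⌊r / t⌋₊ with hk
      have hk1 : 1 ≤ k := Nat.le_floor (by exact_mod_cast hq1.le)
      set j := Nat.log 2 k with hj
      have h1 : (2:ℝ) ^ j ≤ r / t := by
        have hnat := Nat.pow_log_le_self 2 (by omega : k ≠ 0)
        calc (2:ℝ) ^ j = ((2 ^ j : ℕ) : ℝ) := by push_cast; ring
          _ ≤ (k : ℝ) := by exact_mod_cast hnat
          _ ≤ r / t := Nat.floor_le (by positivity)
      have h2 : r / t < 2 ^ (j + 1) := by
        have hlt : k < 2 ^ (j + 1) := Nat.lt_pow_succ_log_self (by norm_num) k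
        calc r / t < (k : ℝ) + 1 := Nat.lt_floor_add_one _
          _ ≤ (2:ℝ) ^ (j + 1) := by exact_mod_cast Nat.succ_le_of_lt hlt
      refine Set.mem_iUnion.mpr ⟨j, hgraph, ?_, ?_⟩
      · rw [hT]
        simp only
        rw [div_le_iff₀ (by positivity)]
        rw [div_lt_iff₀ htpos] at h2
        nlinarith
      · rw [hT]
        simp only
        have hj1 : (2:ℝ) ^ j * t ≤ r := by
          rw [le_div_iff₀ htpos] at h1
          linarith
        have h2j : 2 * (r / 2 ^ (j + 1)) = r / 2 ^ j := by
          rw [pow_succ]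
          field_simp
        rw [h2j, le_div_iff₀ (by positivity)]
        nlinarith
  haveI : NullSingletonClass (μH[(n : ℝ)] :
      Measure (EuclideanSpace ℝ (Fin n) × ℝ)) := by
    apply MeasureTheory.Measure.noAtoms_hausdorff
    have : 0 < n := hn
    exact_mod_cast this
  have key : ∀ γ : ℝ, 1 ≤ γ →
      ∑' j : ℕ, ENNReal.ofReal (T j ^ γ) ≤ ENNReal.ofReal (r ^ γ) * 2 := by
    intro γ hγ
    have hterm : ∀ j : ℕ, ENNReal.ofReal (T j ^ γ)
        ≤ ENNReal.ofReal (r ^ γ) * (2⁻¹ : ℝ≥0∞) ^ (j + 1) := by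
      intro j
      have hu0 : (0:ℝ) < ((2:ℝ)⁻¹) ^ (j + 1) := by positivity
      have hu1 : ((2:ℝ)⁻¹) ^ (j + 1) ≤ 1 := pow_le_one₀ (by norm_num) (by norm_num)
      have hTj : T j = r * ((2:ℝ)⁻¹) ^ (j + 1) := by
        rw [hT]
        simp only
        rw [div_eq_mul_inv, inv_pow]
      have h1 : T j ^ γ = r ^ γ * (((2:ℝ)⁻¹) ^ (j + 1)) ^ γ := by
        rw [hTj, Real.mul_rpow hr0.le hu0.le]
      have h2 : (((2:ℝ)⁻¹) ^ (j + 1)) ^ γ ≤ ((2:ℝ)⁻¹) ^ (j + 1) := by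
        calc (((2:ℝ)⁻¹) ^ (j + 1)) ^ γ ≤ (((2:ℝ)⁻¹) ^ (j + 1)) ^ (1:ℝ) :=
              Real.rpow_le_rpow_of_exponent_ge hu0 hu1 hγ
          _ = ((2:ℝ)⁻¹) ^ (j + 1) := Real.rpow_one _
      calc ENNReal.ofReal (T j ^ γ)
          ≤ ENNReal.ofReal (r ^ γ * ((2:ℝ)⁻¹) ^ (j + 1)) := by
            apply ENNReal.ofReal_le_ofReal
            rw [h1]
            exact mul_le_mul_of_nonneg_left h2 (Real.rpow_nonneg hr0.le γ)
        _ = ENNReal.ofReal (r ^ γ) * ENNReal.ofReal (((2:ℝ)⁻¹) ^ (j + 1)) :=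
            ENNReal.ofReal_mul (Real.rpow_nonneg hr0.le γ)
        _ = ENNReal.ofReal (r ^ γ) * (2⁻¹ : ℝ≥0∞) ^ (j + 1) := by
            rw [ENNReal.ofReal_pow (by norm_num)]
            congr 2
            rw [ENNReal.ofReal_inv_of_pos two_pos]
            norm_num
    calc ∑' j : ℕ, ENNReal.ofReal (T j ^ γ)
        ≤ ∑' j : ℕ, ENNReal.ofReal (r ^ γ) * (2⁻¹ : ℝ≥0∞) ^ (j + 1) :=
          ENNReal.tsum_le_tsum hterm
      _ = ENNReal.ofReal (r ^ γ) * ∑' j : ℕ, (2⁻¹ : ℝ≥0∞) ^ (j + 1) :=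
          ENNReal.tsum_mul_left
      _ ≤ ENNReal.ofReal (r ^ γ) * ∑' j : ℕ, (2⁻¹ : ℝ≥0∞) ^ j := by
          apply mul_le_mul_right
          exact ENNReal.tsum_le_tsum fun j =>
            pow_le_pow_right_of_le_one' (by norm_num) (by omega)
      _ = ENNReal.ofReal (r ^ γ) * 2 := by
          rw [ENNReal.tsum_geometric, ENNReal.one_sub_inv_two, inv_inv]
  calc μH[(n : ℝ)] (ball (0 : EuclideanSpace ℝ (Fin n) × ℝ) r ∩ graphAlpha n α)
      ≤ μH[(n : ℝ)] ({((0 : EuclideanSpace ℝ (Fin n)), (0 : ℝ))} :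
          Set (EuclideanSpace ℝ (Fin n) × ℝ)) +
        μH[(n : ℝ)] (⋃ j : ℕ, {p : EuclideanSpace ℝ (Fin n) × ℝ |
          p.2 = ‖p.1‖ ^ α ∧ T j ≤ p.2 ∧ p.2 ≤ 2 * T j}) :=
        (measure_mono hcover).trans (measure_union_le _ _)
    _ ≤ 0 + ∑' j : ℕ, μH[(n : ℝ)] {p : EuclideanSpace ℝ (Fin n) × ℝ |
          p.2 = ‖p.1‖ ^ α ∧ T j ≤ p.2 ∧ p.2 ≤ 2 * T j} := by
        apply add_le_add
        · rw [measure_singleton]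
        · exact measure_iUnion_le _
    _ ≤ ∑' j : ℕ, levC n α * (ENNReal.ofReal (T j ^ (1 + α⁻¹ * ((n : ℝ) - 1)))
          + ENNReal.ofReal (T j ^ (α⁻¹ * (n : ℝ)))) := by
        rw [zero_add]
        exact ENNReal.tsum_le_tsum fun j => level_bound hn hα0 hα1 (hT0 j) (hT4 j)
    _ = levC n α * ((∑' j : ℕ, ENNReal.ofReal (T j ^ (1 + α⁻¹ * ((n : ℝ) - 1))))
          + ∑' j : ℕ, ENNReal.ofReal (T j ^ (α⁻¹ * (n : ℝ)))) := by
        rw [ENNReal.tsum_mul_left, ENNReal.tsum_add]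
    _ ≤ levC n α * (ENNReal.ofReal (r ^ (1 + α⁻¹ * ((n : ℝ) - 1))) * 2
          + ENNReal.ofReal (r ^ (α⁻¹ * (n : ℝ))) * 2) := by
        exact mul_le_mul_right (add_le_add (key _ hγ₁1) (key _ hγ₂1)) _
    _ = levC n α * 2 * (ENNReal.ofReal (r ^ (1 + α⁻¹ * ((n : ℝ) - 1)))
          + ENNReal.ofReal (r ^ (α⁻¹ * (n : ℝ)))) := by ring

lemma levC_ne_top (n : ℕ) (α : ℝ) : levC n α ≠ ∞ :=
  ENNReal.mul_ne_top (slabC_ne_top n α) ENNReal.ofReal_ne_top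

/-- Failure of the lower ADR condition at `0` for the graph domains `Ω_α`:
at large scales when `α > 1`, and at small scales when `α < 1`. -/
theorem stmt10 {n : ℕ} (hn : 2 ≤ n) (α : ℝ) (hα : 0 < α) (hα1 : α ≠ 1) :
    (1 < α →
      Tendsto
        (fun r : ℝ =>
          μH[(n : ℝ)] (ball (0 : EuclideanSpace ℝ (Fin n) × ℝ) r ∩ graphAlpha n α) /
            ENNReal.ofReal (r ^ n))
        atTop (nhds 0)) ∧
    (α < 1 →
      Tendsto
        (fun r : ℝ =>
          μH[(n : ℝ)] (ball (0 : EuclideanSpace ℝ (Fin n) × ℝ) r ∩ graphAlpha n α) /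
            ENNReal.ofReal (r ^ n))
        (nhdsWithin 0 (Set.Ioi 0)) (nhds 0)) := by
  have hn1 : 1 ≤ n := le_trans one_le_two hn
  have hn2 : (2:ℝ) ≤ (n:ℝ) := by exact_mod_cast hn
  have hνn : ((n - 1 : ℕ) : ℝ) = (n:ℝ) - 1 := by
    rw [Nat.cast_sub hn1]; norm_num
  constructor
  · -- case α > 1
    intro hαgt
    have hβ0 : 0 < α⁻¹ := inv_pos.mpr hα
    have hβ1 : α⁻¹ < 1 := by
      rw [inv_lt_one_iff₀]; right; exact hαgt
    set γ : ℝ := 1 + α⁻¹ * ((n:ℝ) - 1) with hγ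
    have hn1' : (0:ℝ) < (n:ℝ) - 1 := by linarith
    have hγn : γ < (n:ℝ) := by
      have h := mul_lt_mul_of_pos_right hβ1 hn1'
      rw [one_mul] at h
      rw [hγ]; linarith
    have hγ0 : 0 < γ := by
      have h := mul_pos hβ0 hn1'
      rw [hγ]; linarith
    set D : ℝ≥0∞ := slabC n α * ENNReal.ofReal ((2:ℝ) ^ γ) with hD
    have hDtop : D ≠ ∞ := ENNReal.mul_ne_top (slabC_ne_top n α) ENNReal.ofReal_ne_top
    set g : ℝ → ℝ≥0∞ := fun r =>
      (innerC n α + slabC n α * ENNReal.ofReal ((2 * r) * ((2 * r) ^ α⁻¹) ^ (n - 1))) /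
        ENNReal.ofReal (r ^ n) with hg
    have hgeq : ∀ r : ℝ, 2 ≤ r → g r =
        innerC n α * ENNReal.ofReal (r ^ (-(n:ℝ))) + D * ENNReal.ofReal (r ^ (γ - n)) := by
      intro r hr
      have hr0 : (0:ℝ) < r := by linarith
      have h2r : (0:ℝ) < 2 * r := by linarith
      have hrn : (0:ℝ) < r ^ n := by positivity
      have hXdiv : ((2 * r) * ((2 * r) ^ α⁻¹) ^ (n - 1)) / r ^ n
          = (2:ℝ) ^ γ * r ^ (γ - (n:ℝ)) := by
        have e1 : ((2 * r) ^ α⁻¹) ^ (n - 1) = (2 * r) ^ (α⁻¹ * ((n:ℝ) - 1)) := by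
          rw [← Real.rpow_natCast ((2 * r) ^ α⁻¹) (n - 1), ← Real.rpow_mul h2r.le, hνn]
        have e2 : (2 * r) * (2 * r) ^ (α⁻¹ * ((n:ℝ) - 1)) = (2 * r) ^ γ := by
          rw [hγ, Real.rpow_add h2r, Real.rpow_one]
        have e3 : (2 * r) ^ γ = 2 ^ γ * r ^ γ := Real.mul_rpow (by norm_num) hr0.le
        have e4 : r ^ γ / r ^ (n:ℕ) = r ^ (γ - (n:ℝ)) := by
          rw [← Real.rpow_natCast r n, ← Real.rpow_sub hr0]
        rw [e1, e2, e3, mul_div_assoc, e4]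
      rw [hg]
      simp only
      rw [ENNReal.add_div]
      congr 1
      · rw [ENNReal.div_eq_inv_mul, ← ENNReal.ofReal_inv_of_pos hrn, mul_comm]
        congr 1
        rw [← Real.rpow_natCast r n, ← Real.rpow_neg hr0.le]
      · rw [mul_div_assoc, ← ENNReal.ofReal_div_of_pos hrn, hXdiv,
          ENNReal.ofReal_mul (Real.rpow_nonneg (by norm_num) γ), ← mul_assoc]
    have hgtendsto : Tendsto g atTop (𝓝 0) := by
      have l1 : Tendsto (fun r : ℝ => ENNReal.ofReal (r ^ (-(n:ℝ)))) atTop (𝓝 0) := by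
        have hb := tendsto_rpow_neg_atTop (show (0:ℝ) < (n:ℝ) by linarith)
        have := (ENNReal.continuous_ofReal.tendsto 0).comp hb
        simpa [Function.comp_def] using this
      have l2 : Tendsto (fun r : ℝ => ENNReal.ofReal (r ^ (γ - (n:ℝ)))) atTop (𝓝 0) := by
        have hb := tendsto_rpow_neg_atTop (show (0:ℝ) < (n:ℝ) - γ by linarith)
        have hb' : Tendsto (fun r : ℝ => r ^ (γ - (n:ℝ))) atTop (𝓝 0) := by
          have : (fun r : ℝ => r ^ (γ - (n:ℝ))) = fun r : ℝ => r ^ (-((n:ℝ) - γ)) := by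
            funext r; congr 1; ring
          rw [this]; exact hb
        have := (ENNReal.continuous_ofReal.tendsto 0).comp hb'
        simpa [Function.comp_def] using this
      have lsum : Tendsto (fun r : ℝ => innerC n α * ENNReal.ofReal (r ^ (-(n:ℝ)))
          + D * ENNReal.ofReal (r ^ (γ - (n:ℝ)))) atTop (𝓝 0) := by
        have h1 := ENNReal.Tendsto.const_mul (a := innerC n α) l1 (Or.inr (innerC_ne_top n α))
        have h2 := ENNReal.Tendsto.const_mul (a := D) l2 (Or.inr hDtop)
        rw [mul_zero] at h1 h2
        simpa using h1.add h2
      apply Tendsto.congr' _ lsum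
      filter_upwards [eventually_ge_atTop (2:ℝ)] with r hr
      exact (hgeq r hr).symm
    apply tendsto_of_tendsto_of_tendsto_of_le_of_le' tendsto_const_nhds hgtendsto
    · filter_upwards with r using zero_le
    · filter_upwards [eventually_ge_atTop (2:ℝ)] with r hr
      exact ENNReal.div_le_div_right (measure_bound_gt hn1 hαgt hr) _
  · -- case α < 1
    intro hαlt
    have hβ1 : 1 < α⁻¹ := one_lt_inv_iff₀.mpr ⟨hα, hαlt⟩
    set γ₁ : ℝ := 1 + α⁻¹ * ((n:ℝ) - 1) with hγ₁
    set γ₂ : ℝ := α⁻¹ * (n:ℝ) with hγ₂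
    have hn1' : (0:ℝ) < (n:ℝ) - 1 := by linarith
    have hγ₁n : (n:ℝ) < γ₁ := by
      have h := mul_lt_mul_of_pos_right hβ1 hn1'
      rw [one_mul] at h
      rw [hγ₁]; linarith
    have hγ₂n : (n:ℝ) < γ₂ := by
      have h := mul_lt_mul_of_pos_right hβ1 (show (0:ℝ) < (n:ℝ) by linarith)
      rw [one_mul] at h
      rw [hγ₂]; linarith
    set g : ℝ → ℝ≥0∞ := fun r =>
      levC n α * 2 * (ENNReal.ofReal (r ^ γ₁) + ENNReal.ofReal (r ^ γ₂)) /
        ENNReal.ofReal (r ^ n) with hg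
    have hDtop : levC n α * 2 ≠ ∞ := ENNReal.mul_ne_top (levC_ne_top n α) (by norm_num)
    have hgeq : ∀ r : ℝ, 0 < r → g r =
        levC n α * 2 * (ENNReal.ofReal (r ^ (γ₁ - (n:ℝ))) + ENNReal.ofReal (r ^ (γ₂ - (n:ℝ)))) := by
      intro r hr0
      have hrn : (0:ℝ) < r ^ n := by positivity
      have ediv : ∀ γ : ℝ, r ^ γ / r ^ (n:ℕ) = r ^ (γ - (n:ℝ)) := by
        intro γ
        rw [← Real.rpow_natCast r n, ← Real.rpow_sub hr0]
      rw [hg]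
      simp only
      rw [mul_div_assoc, ENNReal.add_div, ← ENNReal.ofReal_div_of_pos hrn,
        ← ENNReal.ofReal_div_of_pos hrn, ediv γ₁, ediv γ₂]
    have hgtendsto : Tendsto g (nhdsWithin 0 (Set.Ioi 0)) (𝓝 0) := by
      have lim : ∀ γ : ℝ, 0 < γ → Tendsto (fun r : ℝ => ENNReal.ofReal (r ^ γ))
          (nhdsWithin 0 (Set.Ioi 0)) (𝓝 0) := by
        intro γ hγpos
        have hc : Tendsto (fun r : ℝ => r ^ γ) (nhds 0) (𝓝 ((0:ℝ) ^ γ)) :=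
          (Real.continuousAt_rpow_const 0 γ (Or.inr hγpos.le)).tendsto
        rw [Real.zero_rpow hγpos.ne'] at hc
        have hc' : Tendsto (fun r : ℝ => r ^ γ) (nhdsWithin 0 (Set.Ioi 0)) (𝓝 0) :=
          hc.mono_left nhdsWithin_le_nhds
        have := (ENNReal.continuous_ofReal.tendsto 0).comp hc'
        simpa [Function.comp_def] using this
      have lsum : Tendsto (fun r : ℝ => levC n α * 2 *
          (ENNReal.ofReal (r ^ (γ₁ - (n:ℝ))) + ENNReal.ofReal (r ^ (γ₂ - (n:ℝ)))))
          (nhdsWithin 0 (Set.Ioi 0)) (𝓝 0) := by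
        have hadd := (lim _ (by linarith : (0:ℝ) < γ₁ - (n:ℝ))).add
          (lim _ (by linarith : (0:ℝ) < γ₂ - (n:ℝ)))
        rw [add_zero] at hadd
        have := ENNReal.Tendsto.const_mul (a := levC n α * 2) hadd (Or.inr hDtop)
        rw [mul_zero] at this
        exact this
      apply Tendsto.congr' _ lsum
      filter_upwards [self_mem_nhdsWithin] with r hr
      exact (hgeq r hr).symm
    apply tendsto_of_tendsto_of_tendsto_of_le_of_le' tendsto_const_nhds hgtendsto
    · filter_upwards with r using zero_le
    · have hmem : Set.Ioc (0:ℝ) (1/2) ∈ nhdsWithin (0:ℝ) (Set.Ioi 0) :=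
        Ioc_mem_nhdsGT_of_mem ⟨le_rfl, by norm_num⟩
      filter_upwards [hmem] with r hr
      exact ENNReal.div_le_div_right (measure_bound_lt hn1 hα hαlt hr.1 hr.2) _
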